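/- Let φ be an anisotropic quadratic form over K representing 1, and f ∈ K[X] an irreducible monic polynomial in one variable. Then φ becomes isotropic over K(f) = K[X]/(f) if and only if f can be written as a product of at most deg(f) values represented by φ over K(X). -/

import Mathlib

open scoped TensorProduct

noncomputable section

/-- Nonzero values represented by a quadratic form, as a subset of the field. -/
def Dv {K V : Type*} [Field K] [AddCommGroup V] [Module K V]
    (Q : QuadraticForm K V) : Set K :=
  {a | a ≠ 0 ∧ ∃ v, Q v = a}

/-- Values represented by a quadratic form, as a set of units. -/
def Dunits {K V : Type*} [Field K] [AddCommGroup V] [Module K V]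
    (Q : QuadraticForm K V) : Set Kˣ :=
  {u | ∃ v, Q v = (u : K)}

/-- `T_K(Q)`: the subgroup of `Kˣ` generated by the values represented by `Q`. -/
def Tgrp {K V : Type*} [Field K] [AddCommGroup V] [Module K V]
    (Q : QuadraticForm K V) : Subgroup Kˣ :=
  Subgroup.closure (Dunits Q)

/-- `N_K(Q)`: the subgroup of `Kˣ` generated by products of two represented values. -/
def Ngrp {K V : Type*} [Field K] [AddCommGroup V] [Module K V]
    (Q : QuadraticForm K V) : Subgroup Kˣ :=
  Subgroup.closure {u : Kˣ | ∃ a b : Kˣ, a ∈ Dunits Q ∧ b ∈ Dunits Q ∧ u = a * b}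

/-- Products of exactly `m` values represented by `Q`. -/
def Dpow {K V : Type*} [Field K] [AddCommGroup V] [Module K V]
    (Q : QuadraticForm K V) (m : ℕ) : Set K :=
  {x | ∃ c : Fin m → K, (∀ i, c i ∈ Dv Q) ∧ x = ∏ i, c i}

/-- Isotropy of (the scalar extension of) `Q` over a commutative `K`-algebra `F`. -/
def IsotropicOver {K V : Type*} [Field K] [Invertible (2 : K)] [AddCommGroup V] [Module K V]
    (Q : QuadraticForm K V) (F : Type*) [CommRing F] [Algebra K F] : Prop :=
  ∃ w : F ⊗[K] V, w ≠ 0 ∧ Q.baseChange F w = 0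

/-- The polynomial obtained by evaluating `Q` at the generic point in the basis `b`. -/
def genPoly {K V ι : Type*} [Field K] [Invertible (2 : K)] [AddCommGroup V] [Module K V]
    [Fintype ι] (b : Module.Basis ι K V) (Q : QuadraticForm K V) : MvPolynomial ι K :=
  Q.baseChange (MvPolynomial ι K) (∑ i, MvPolynomial.X i ⊗ₜ[K] b i)

/-- The affine coordinate ring of the quadric `Q = 0` (in the coordinates given by `b`). -/
abbrev CoordRing {K V ι : Type*} [Field K] [Invertible (2 : K)] [AddCommGroup V] [Module K V]
    [Fintype ι] (b : Module.Basis ι K V) (Q : QuadraticForm K V) : Type _ :=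
  MvPolynomial ι K ⧸ Ideal.span {genPoly b Q}

/-- The function field `K(Q)` of the quadric `Q = 0`. -/
abbrev FunctionFieldQF {K V ι : Type*} [Field K] [Invertible (2 : K)] [AddCommGroup V]
    [Module K V] [Fintype ι] (b : Module.Basis ι K V) (Q : QuadraticForm K V) : Type _ :=
  FractionRing (CoordRing b Q)

namespace S8

section Dpow
variable {L W : Type*} [Field L] [AddCommGroup W] [Module L W] (Q : QuadraticForm L W)

theorem mem_Dpow_one {x : L} (hx : x ∈ Dv Q) : x ∈ Dpow Q 1 :=
  ⟨fun _ => x, fun _ => hx, by simp⟩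

theorem one_mem_Dpow_zero : (1 : L) ∈ Dpow Q 0 :=
  ⟨fun i => i.elim0, fun i => i.elim0, by simp⟩

theorem Dpow_mul {x y : L} {k l : ℕ} (hx : x ∈ Dpow Q k) (hy : y ∈ Dpow Q l) :
    x * y ∈ Dpow Q (k + l) := by
  obtain ⟨c, hc, rfl⟩ := hx
  obtain ⟨d, hd, rfl⟩ := hy
  refine ⟨Fin.append c d, fun i => ?_, ?_⟩
  · refine Fin.addCases (fun i => ?_) (fun i => ?_) i
    · rw [Fin.append_left]; exact hc i
    · rw [Fin.append_right]; exact hd i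
  · rw [Fin.prod_univ_add]
    simp [Fin.append_left, Fin.append_right]

end Dpow



variable {K : Type*} [Field K] [Invertible (2 : K)] {n : ℕ}

/-- matrix of the associated bilinear form in the standard basis -/
def Mmat (φ : QuadraticForm K (Fin n → K)) (i j : Fin n) : K :=
  QuadraticMap.associated (R := K) φ (Pi.basisFun K (Fin n) i) (Pi.basisFun K (Fin n) j)

theorem Mmat_symm (φ : QuadraticForm K (Fin n → K)) (i j : Fin n) :
    Mmat φ i j = Mmat φ j i := by
  have := (QuadraticMap.associated_isSymm K φ) (Pi.basisFun K (Fin n) i)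
    (Pi.basisFun K (Fin n) j)
  simpa [Mmat] using this

variable (φ : QuadraticForm K (Fin n → K))

def tv (A : Type*) [CommRing A] [Algebra K A] (a : Fin n → A) :
    A ⊗[K] (Fin n → K) := ∑ i, a i ⊗ₜ[K] Pi.basisFun K (Fin n) i

variable {A : Type*} [CommRing A] [Algebra K A]

theorem tv_eq (a : Fin n → A) :
    tv (K := K) A a = ∑ i, a i • ((Pi.basisFun K (Fin n)).baseChange A i) := by
  simp [tv, Module.Basis.baseChange_apply, TensorProduct.smul_tmul']

theorem tv_eq_zero_iff (a : Fin n → A) : tv (K := K) A a = 0 ↔ a = 0 := by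
  constructor
  · intro h
    funext i
    have := congrArg (fun x => ((Pi.basisFun K (Fin n)).baseChange A).repr x i) h
    simp only [tv_eq, map_sum, map_smul, Module.Basis.repr_self, Finsupp.smul_single,
      smul_eq_mul, mul_one, Finsupp.coe_finset_sum, Finset.sum_apply,
      Finsupp.single_apply, Finset.sum_ite_eq', Finset.mem_univ, if_true,
      map_zero, Finsupp.coe_zero, Pi.zero_apply] at this
    simpa using this
  · rintro rfl
    simp [tv]

theorem tv_surj (w : A ⊗[K] (Fin n → K)) : ∃ a, tv (K := K) A a = w := by
  refine ⟨fun i => ((Pi.basisFun K (Fin n)).baseChange A).repr w i, ?_⟩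
  rw [tv_eq]
  exact ((Pi.basisFun K (Fin n)).baseChange A).sum_repr w

/-- The quadratic form evaluated coordinatewise over any `K`-algebra. -/
def QQ (A : Type*) [CommRing A] [Algebra K A] (a : Fin n → A) : A :=
  ∑ i, ∑ j, a i * a j * algebraMap K A (Mmat φ i j)

theorem QA_eq (a : Fin n → A) :
    φ.baseChange A (tv (K := K) A a) = QQ φ A a := by
  rw [QQ]
  letI : Invertible (2 : A) := (Invertible.map (algebraMap K A) 2).copy 2 (map_ofNat _ _).symm
  rw [← QuadraticMap.associated_eq_self_apply A, QuadraticForm.associated_baseChange]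
  rw [tv]
  simp only [map_sum, LinearMap.sum_apply, LinearMap.BilinForm.baseChange_tmul,
    Algebra.smul_def]
  refine Finset.sum_congr rfl fun i _ => Finset.sum_congr rfl fun j _ => ?_
  rw [Mmat_symm φ i j, mul_comm (a j) (a i)]
  exact mul_comm ((algebraMap K A) (Mmat φ j i)) (a i * a j)

theorem phi_eq (v : Fin n → K) : φ v = QQ φ K v := by
  conv_lhs => rw [← (Pi.basisFun K (Fin n)).sum_repr v,
    ← QuadraticMap.associated_eq_self_apply K φ]
  simp only [QQ, map_sum, map_smul, LinearMap.sum_apply, LinearMap.smul_apply,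
    smul_eq_mul, Pi.basisFun_repr, Algebra.algebraMap_self, RingHom.id_apply,
    Finset.mul_sum]
  refine Finset.sum_congr rfl fun i _ => Finset.sum_congr rfl fun j _ => ?_
  rw [Mmat_symm φ i j]
  show v i * (v j * Mmat φ j i) = v i * v j * Mmat φ j i
  ring

theorem QQ_natural {B : Type*} [CommRing B] [Algebra K B] (ρ : A →ₐ[K] B)
    (a : Fin n → A) : QQ φ B (fun i => ρ (a i)) = ρ (QQ φ A a) := by
  simp only [QQ, map_sum, map_mul, AlgHom.commutes]

theorem QQ_smul (c : A) (a : Fin n → A) : QQ φ A (c • a) = c ^ 2 * QQ φ A a := by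
  simp only [QQ, Pi.smul_apply, smul_eq_mul, Finset.mul_sum]
  refine Finset.sum_congr rfl fun i _ => Finset.sum_congr rfl fun j _ => ?_
  ring


section Poly
open Polynomial
variable (φ : QuadraticForm K (Fin n → K))

theorem QQ_coeff (u : Fin n → Polynomial K) (k : ℕ) :
    (QQ φ (Polynomial K) u).coeff k = ∑ i, ∑ j, ((u i * u j).coeff k) * Mmat φ i j := by
  simp only [QQ, Polynomial.algebraMap_eq, finset_sum_coeff, coeff_mul_C]

theorem QQ_coeff_top (u : Fin n → Polynomial K) (d : ℕ) (hd : ∀ i, (u i).natDegree ≤ d) :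
    (QQ φ (Polynomial K) u).coeff (2 * d) = φ (fun i => (u i).coeff d) := by
  rw [QQ_coeff, phi_eq, QQ]
  refine Finset.sum_congr rfl fun i _ => Finset.sum_congr rfl fun j _ => ?_
  rw [two_mul, coeff_mul_add_eq_of_natDegree_le (hd i) (hd j)]
  simp

theorem QQ_natDegree_le (u : Fin n → Polynomial K) (d : ℕ) (hd : ∀ i, (u i).natDegree ≤ d) :
    (QQ φ (Polynomial K) u).natDegree ≤ 2 * d := by
  refine natDegree_sum_le_of_forall_le _ _ fun i _ =>
    natDegree_sum_le_of_forall_le _ _ fun j _ => ?_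
  refine (natDegree_mul_le).trans ?_
  rw [Polynomial.algebraMap_eq, natDegree_C, add_zero, two_mul]
  exact (natDegree_mul_le).trans (add_le_add (hd i) (hd j))

theorem lead_ne_zero (haniso : φ.Anisotropic) (u : Fin n → Polynomial K) (hu : u ≠ 0) :
    φ (fun i => (u i).coeff (Finset.univ.sup fun i => (u i).natDegree)) ≠ 0 := by
  set d := Finset.univ.sup fun i => (u i).natDegree with hd
  have hex : ∃ i, u i ≠ 0 ∧ (u i).natDegree = d := by
    obtain ⟨j₀, hj₀⟩ := Function.ne_iff.1 hu
    rcases Nat.eq_zero_or_pos d with h0 | hpos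
    · refine ⟨j₀, hj₀, le_antisymm ?_ ?_⟩
      · rw [hd]; exact Finset.le_sup (f := fun i => (u i).natDegree) (Finset.mem_univ j₀)
      · rw [h0]; exact Nat.zero_le _
    · have : (Finset.univ : Finset (Fin n)).Nonempty := ⟨j₀, Finset.mem_univ _⟩
      obtain ⟨i, _, hi⟩ := Finset.exists_mem_eq_sup Finset.univ this
        (fun i => (u i).natDegree)
      refine ⟨i, fun h => ?_, hi.symm⟩
      rw [h, natDegree_zero] at hi
      omega
  obtain ⟨i, hi0, hideg⟩ := hex
  intro hzero
  have : (fun i => (u i).coeff d) = 0 := haniso _ hzero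
  have := congrFun this i
  rw [← hideg] at this
  exact hi0 (leadingCoeff_eq_zero.1 this)

theorem QQ_poly_spec (haniso : φ.Anisotropic) (u : Fin n → Polynomial K) (hu : u ≠ 0) :
    QQ φ (Polynomial K) u ≠ 0 ∧
    (QQ φ (Polynomial K) u).natDegree = 2 * (Finset.univ.sup fun i => (u i).natDegree) ∧
    (QQ φ (Polynomial K) u).leadingCoeff
      = φ (fun i => (u i).coeff (Finset.univ.sup fun i => (u i).natDegree)) := by
  set d := Finset.univ.sup fun i => (u i).natDegree with hd
  have hdle : ∀ i, (u i).natDegree ≤ d := fun i =>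
    Finset.le_sup (f := fun i => (u i).natDegree) (Finset.mem_univ i)
  have htop := QQ_coeff_top φ u d hdle
  have hlead := lead_ne_zero φ haniso u hu
  rw [← hd] at hlead
  have hne : QQ φ (Polynomial K) u ≠ 0 := fun h => by
    rw [h, Polynomial.coeff_zero] at htop
    exact hlead htop.symm
  have hco : (QQ φ (Polynomial K) u).coeff (2 * d) ≠ 0 := htop ▸ hlead
  have hdeg : (QQ φ (Polynomial K) u).natDegree = 2 * d :=
    le_antisymm (QQ_natDegree_le φ u d hdle) (le_natDegree_of_ne_zero hco)
  exact ⟨hne, hdeg, by rw [leadingCoeff, hdeg, htop]⟩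

end Poly

theorem extract_pow {f : Polynomial K} (hmonic : f.Monic) (hfdeg : 0 < f.natDegree) :
    ∀ (m : ℕ) (u : Fin n → Polynomial K), (∀ j, (u j).natDegree ≤ m) → u ≠ 0 →
      ∃ (t : ℕ) (u' : Fin n → Polynomial K), u = f ^ t • u' ∧ ¬ ∀ j, f ∣ u' j := by
  intro m
  induction m using Nat.strong_induction_on with
  | _ m IH =>
    intro u hle hu
    by_cases hdvd : ∀ j, f ∣ u j
    · obtain ⟨j₀, hj₀⟩ := Function.ne_iff.1 hu
      have hm : 0 < m := by
        have h1 : f.natDegree ≤ (u j₀).natDegree :=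
          Polynomial.natDegree_le_of_dvd (hdvd j₀) hj₀
        have := hle j₀
        omega
      set w : Fin n → Polynomial K := fun j => u j /ₘ f with hw
      have huw : ∀ j, u j = f * w j := by
        intro j
        have h0 : u j %ₘ f = 0 := (Polynomial.modByMonic_eq_zero_iff_dvd hmonic).2 (hdvd j)
        have := Polynomial.modByMonic_add_div (u j) f
        rw [h0, zero_add] at this
        exact this.symm
      have hwne : w ≠ 0 := by
        intro h
        apply hj₀
        rw [huw j₀, h, Pi.zero_apply, mul_zero]
      have hwle : ∀ j, (w j).natDegree ≤ m - 1 := by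
        intro j
        have h1 := Polynomial.natDegree_divByMonic (u j) hmonic
        have h2 := hle j
        show (u j /ₘ f).natDegree ≤ m - 1
        omega
      obtain ⟨t, u', h1, h2⟩ := IH (m - 1) (by omega) w hwle hwne
      refine ⟨t + 1, u', ?_, h2⟩
      funext j
      rw [huw j, congrFun h1 j]
      simp only [Pi.smul_apply, smul_eq_mul, pow_succ]
      ring
    · exact ⟨0, u, by simp, hdvd⟩

theorem mult_prod {p : Polynomial K} (hp : Prime p) {ι : Type*} (s : Finset ι)
    (g : ι → Polynomial K) (h : ∀ i ∈ s, g i ≠ 0) :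
    multiplicity p (∏ i ∈ s, g i) = ∑ i ∈ s, multiplicity p (g i) := by
  induction s using Finset.cons_induction with
  | empty => simp [multiplicity_eq_zero.2 hp.not_dvd_one]
  | cons a s ha ih =>
    rw [Finset.prod_cons, Finset.sum_cons, multiplicity_mul hp, ih (fun i hi => h i (Finset.mem_cons_of_mem hi))]
    exact FiniteMultiplicity.of_not_isUnit hp.not_isUnit
      (mul_ne_zero (h a (Finset.mem_cons_self _ _))
        (Finset.prod_ne_zero_iff.2 fun i hi => h i (Finset.mem_cons_of_mem hi)))

section Field
variable (φ : QuadraticForm K (Fin n → K))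
variable (F : Type*) [Field F] [Algebra K F]

theorem mem_Dv_iff {x : F} :
    x ∈ Dv (φ.baseChange F) ↔ x ≠ 0 ∧ ∃ a : Fin n → F, QQ φ F a = x := by
  constructor
  · rintro ⟨hx, v, hv⟩
    obtain ⟨a, rfl⟩ := tv_surj (K := K) v
    exact ⟨hx, a, by rw [← QA_eq]; exact hv⟩
  · rintro ⟨hx, a, ha⟩
    exact ⟨hx, tv F a, by rw [QA_eq]; exact ha⟩


end Field

section CRing
variable (φ : QuadraticForm K (Fin n → K))
variable (F : Type*) [CommRing F] [Algebra K F]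

theorem isotropicOver_iff :
    IsotropicOver φ F ↔ ∃ a : Fin n → F, a ≠ 0 ∧ QQ φ F a = 0 := by
  constructor
  · rintro ⟨w, hw, hwz⟩
    obtain ⟨a, rfl⟩ := tv_surj (K := K) w
    exact ⟨a, fun h => hw ((tv_eq_zero_iff a).2 h), by rw [← QA_eq]; exact hwz⟩
  · rintro ⟨a, ha, haz⟩
    exact ⟨tv F a, fun h => ha ((tv_eq_zero_iff a).1 h), by rw [QA_eq]; exact haz⟩

end CRing

section Field2
variable (φ : QuadraticForm K (Fin n → K))
variable (F : Type*) [Field F] [Algebra K F]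

theorem const_mem_Dv {c : K} (v : Fin n → K) (hv : φ v = c) (hc : c ≠ 0) :
    algebraMap K F c ∈ Dv (φ.baseChange F) := by
  rw [mem_Dv_iff]
  refine ⟨fun h => hc ((map_eq_zero (algebraMap K F)).1 h), fun i => algebraMap K F (v i), ?_⟩
  simpa [Algebra.ofId_apply, ← phi_eq, hv] using QQ_natural φ (Algebra.ofId K F) v

theorem sq_mul_mem_Dv (hone : ∃ v, φ v = 1) {x : F} {s : F} (hs : s ≠ 0)
    (hx : x ∈ Dv (φ.baseChange F)) : s ^ 2 * x ∈ Dv (φ.baseChange F) := by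
  rw [mem_Dv_iff] at hx ⊢
  obtain ⟨hx0, a, ha⟩ := hx
  exact ⟨mul_ne_zero (pow_ne_zero _ hs) hx0, s • a, by rw [QQ_smul, ha]⟩

end Field2

theorem rev_dir (φ : QuadraticForm K (Fin n → K)) (f : Polynomial K) (hmonic : f.Monic)
    (hf : Irreducible f)
    (h : ∃ k ≤ f.natDegree, algebraMap (Polynomial K) (FractionRing (Polynomial K)) f ∈
      Dpow (φ.baseChange (FractionRing (Polynomial K))) k) :
    IsotropicOver φ (AdjoinRoot f) := by
  classical
  obtain ⟨k, hk, c, hc, hcf⟩ := h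
  have hp : Prime f := UniqueFactorizationMonoid.irreducible_iff_prime.1 hf
  have hfdeg : 0 < f.natDegree :=
    Polynomial.natDegree_pos_iff_degree_pos.2 (Polynomial.degree_pos_of_irreducible hf)
  have hw : ∀ i, ∃ w : Fin n → FractionRing (Polynomial K),
      QQ φ (FractionRing (Polynomial K)) w = c i :=
    fun i => ((mem_Dv_iff φ (FractionRing (Polynomial K))).1 (hc i)).2
  choose w hwq using hw
  have hint : ∀ i : Fin k, ∃ (b : Polynomial K) (u : Fin n → Polynomial K), b ≠ 0 ∧
      ∀ j, algebraMap (Polynomial K) (FractionRing (Polynomial K)) (u j)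
        = algebraMap (Polynomial K) (FractionRing (Polynomial K)) b * w i j := by
    intro i
    obtain ⟨b, hb⟩ := IsLocalization.exist_integer_multiples
      (nonZeroDivisors (Polynomial K)) Finset.univ (w i)
    choose u hu using fun j => hb j (Finset.mem_univ j)
    refine ⟨(b : Polynomial K), fun j => u j, nonZeroDivisors.ne_zero b.2, fun j => ?_⟩
    rw [hu j, Algebra.smul_def]
  choose b u hb0 hu using hint
  set alg := algebraMap (Polynomial K) (FractionRing (Polynomial K)) with halgdef
  have halg : ∀ i, alg (QQ φ (Polynomial K) (u i)) = alg (b i) ^ 2 * c i := by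
    intro i
    have h1 := QQ_natural φ (IsScalarTower.toAlgHom K (Polynomial K)
      (FractionRing (Polynomial K))) (u i)
    have h2 : (fun j => (IsScalarTower.toAlgHom K (Polynomial K)
        (FractionRing (Polynomial K))) (u i j)) = (alg (b i)) • (w i) := by
      funext j
      exact hu i j
    rw [h2] at h1
    simp only [IsScalarTower.coe_toAlgHom'] at h1
    rw [← h1, QQ_smul, hwq i]
  have hprod : alg (∏ i, QQ φ (Polynomial K) (u i)) = alg ((∏ i, b i) ^ 2 * f) := by
    rw [map_prod]
    calc ∏ i, alg (QQ φ (Polynomial K) (u i)) = ∏ i, (alg (b i) ^ 2 * c i) := by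
          simp only [halg]
      _ = (∏ i, alg (b i)) ^ 2 * ∏ i, c i := by
          rw [Finset.prod_mul_distrib, Finset.prod_pow]
      _ = alg ((∏ i, b i) ^ 2 * f) := by rw [← hcf, map_mul, map_pow, map_prod]
  have hinj : Function.Injective alg := IsFractionRing.injective (Polynomial K) _
  have hprodeq : (∏ i, QQ φ (Polynomial K) (u i)) = (∏ i, b i) ^ 2 * f := hinj hprod
  have hBne : (∏ i, b i) ≠ 0 := Finset.prod_ne_zero_iff.2 fun i _ => hb0 i
  have hRHSne : (∏ i, b i) ^ 2 * f ≠ 0 := mul_ne_zero (pow_ne_zero _ hBne) hmonic.ne_zero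
  have hene : ∀ i : Fin k, QQ φ (Polynomial K) (u i) ≠ 0 := by
    intro i
    have := hprodeq ▸ hRHSne
    exact Finset.prod_ne_zero_iff.1 this i (Finset.mem_univ i)
  have hsum : ∑ i, multiplicity f (QQ φ (Polynomial K) (u i))
      = multiplicity f ((∏ i, b i) ^ 2 * f) := by
    rw [← mult_prod hp Finset.univ _ (fun i _ => hene i), hprodeq]
  have hmordd : Odd (multiplicity f ((∏ i, b i) ^ 2 * f)) := by
    have h1 : multiplicity f ((∏ i, b i) ^ 2 * f)
        = multiplicity f ((∏ i, b i) ^ 2) + multiplicity f f :=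
      multiplicity_mul hp (FiniteMultiplicity.of_not_isUnit hp.not_isUnit hRHSne)
    have h2 : multiplicity f ((∏ i, b i) ^ 2)
        = multiplicity f (∏ i, b i) + multiplicity f (∏ i, b i) := by
      rw [sq]
      exact multiplicity_mul hp (FiniteMultiplicity.of_not_isUnit hp.not_isUnit
        (mul_ne_zero hBne hBne))
    rw [h1, h2, multiplicity_self]
    exact ⟨multiplicity f (∏ i, b i), by ring⟩
  have hex : ∃ i : Fin k, Odd (multiplicity f (QQ φ (Polynomial K) (u i))) := by
    by_contra hcon
    push_neg at hcon
    have : Even (∑ i, multiplicity f (QQ φ (Polynomial K) (u i))) :=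
      Finset.even_sum _ fun i _ => Nat.not_odd_iff_even.1 (hcon i)
    rw [hsum] at this
    exact (Nat.not_odd_iff_even.2 this) hmordd
  obtain ⟨i, hodd⟩ := hex
  have hui : u i ≠ 0 := by
    intro h
    apply hene i
    rw [h]
    simp [QQ]
  obtain ⟨t, u', hut, hnd⟩ := extract_pow hmonic hfdeg
    (Finset.univ.sup fun j => ((u i) j).natDegree) (u i)
    (fun j => Finset.le_sup (f := fun j => ((u i) j).natDegree) (Finset.mem_univ j)) hui
  have he : QQ φ (Polynomial K) (u i) = f ^ (2 * t) * QQ φ (Polynomial K) u' := by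
    rw [hut, QQ_smul, ← pow_mul, mul_comm t 2]
  have hQu' : QQ φ (Polynomial K) u' ≠ 0 := by
    intro h
    apply hene i
    rw [he, h, mul_zero]
  have hmm : multiplicity f (QQ φ (Polynomial K) (u i))
      = 2 * t + multiplicity f (QQ φ (Polynomial K) u') := by
    rw [he, multiplicity_mul hp (FiniteMultiplicity.of_not_isUnit hp.not_isUnit (he ▸ hene i)),
      multiplicity_pow_self_of_prime hp]
  have hdvd : f ∣ QQ φ (Polynomial K) u' := by
    apply multiplicity_ne_zero.1
    rw [hmm] at hodd
    obtain ⟨m, hm⟩ := hodd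
    omega
  rw [isotropicOver_iff]
  push_neg at hnd
  obtain ⟨j₀, hj₀⟩ := hnd
  refine ⟨fun j => AdjoinRoot.mk f (u' j), ?_, ?_⟩
  · intro hzz
    exact (AdjoinRoot.mk_eq_zero.not.2 hj₀) (congrFun hzz j₀)
  · have h1 := QQ_natural φ (Ideal.Quotient.mkₐ K (Ideal.span {f})) u'
    have h2 : (fun j => (Ideal.Quotient.mkₐ K (Ideal.span {f})) (u' j))
        = fun j => AdjoinRoot.mk f (u' j) := rfl
    rw [h2] at h1
    exact h1.trans (AdjoinRoot.mk_eq_zero.2 hdvd)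

theorem multiset_dpow (φ : QuadraticForm K (Fin n → K)) (S : Multiset (Polynomial K))
    (h : ∀ q ∈ S, ∃ k ≤ q.natDegree,
      algebraMap (Polynomial K) (FractionRing (Polynomial K)) q ∈
        Dpow (φ.baseChange (FractionRing (Polynomial K))) k) :
    ∃ k ≤ (S.map Polynomial.natDegree).sum,
      algebraMap (Polynomial K) (FractionRing (Polynomial K)) S.prod ∈
        Dpow (φ.baseChange (FractionRing (Polynomial K))) k := by
  induction S using Multiset.induction_on with
  | empty =>
    exact ⟨0, le_rfl,
      (by simpa using one_mem_Dpow_zero (φ.baseChange (FractionRing (Polynomial K))))⟩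
  | cons a s ih =>
    obtain ⟨k1, hk1, h1⟩ := h a (Multiset.mem_cons_self a s)
    obtain ⟨k2, hk2, h2⟩ := ih fun q hq => h q (Multiset.mem_cons_of_mem hq)
    refine ⟨k1 + k2, ?_, ?_⟩
    · rw [Multiset.map_cons, Multiset.sum_cons]
      omega
    · rw [Multiset.prod_cons, map_mul]
      exact Dpow_mul _ h1 h2

theorem fwd_dir (φ : QuadraticForm K (Fin n → K)) (haniso : φ.Anisotropic)
    (hone : ∃ v, φ v = 1) :
    ∀ (N : ℕ) (f : Polynomial K), f.natDegree ≤ N → f.Monic → Irreducible f →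
    IsotropicOver φ (AdjoinRoot f) →
    ∃ k ≤ f.natDegree,
      algebraMap (Polynomial K) (FractionRing (Polynomial K)) f ∈
        Dpow (φ.baseChange (FractionRing (Polynomial K))) k := by
  intro N
  induction N using Nat.strong_induction_on with
  | _ N IH =>
  intro f hN hmonic hf hiso
  classical
  have hp : Prime f := UniqueFactorizationMonoid.irreducible_iff_prime.1 hf
  have hfdeg : 0 < f.natDegree :=
    Polynomial.natDegree_pos_iff_degree_pos.2 (Polynomial.degree_pos_of_irreducible hf)
  rw [isotropicOver_iff] at hiso
  obtain ⟨a, ha0, haz⟩ := hiso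
  have hlift : ∀ j, ∃ p : Polynomial K,
      AdjoinRoot.mk f p = a j ∧ p.natDegree < f.natDegree := by
    intro j
    obtain ⟨p, hp'⟩ := AdjoinRoot.mk_surjective (a j)
    refine ⟨p %ₘ f, ?_, ?_⟩
    · rw [← hp']
      conv_rhs => rw [← Polynomial.modByMonic_add_div p f]
      rw [map_add, map_mul, AdjoinRoot.mk_self, zero_mul, add_zero]
    · rcases eq_or_ne (p %ₘ f) 0 with h | h
      · rw [h, Polynomial.natDegree_zero]; exact hfdeg
      · exact Polynomial.natDegree_lt_natDegree h (Polynomial.degree_modByMonic_lt p hmonic)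
  choose u hu hud using hlift
  have hu0 : u ≠ 0 := by
    intro h
    apply ha0
    funext j
    rw [← hu j, congrFun h j]
    simp
  have hnuniv : (Finset.univ : Finset (Fin n)).Nonempty := by
    obtain ⟨j₀, _⟩ := Function.ne_iff.1 hu0
    exact ⟨j₀, Finset.mem_univ _⟩
  obtain ⟨v, hv, hv1⟩ := Finset.extract_gcd u hnuniv
  have hg0ne : Finset.univ.gcd u ≠ 0 := by
    intro h
    rw [Finset.gcd_eq_zero_iff] at h
    exact hu0 (funext fun j => h j (Finset.mem_univ j))
  have hfg0 : ¬ f ∣ Finset.univ.gcd u := by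
    intro hdvd
    apply ha0
    funext j
    rw [← hu j]
    exact AdjoinRoot.mk_eq_zero.2 (hdvd.trans (Finset.gcd_dvd (Finset.mem_univ j)))
  have hv0 : v ≠ 0 := by
    intro h
    apply hu0
    funext j
    rw [hv j (Finset.mem_univ j), congrFun h j]
    simp
  have hfu : f ∣ QQ φ (Polynomial K) u := by
    apply AdjoinRoot.mk_eq_zero.1
    have h1 := QQ_natural φ (Ideal.Quotient.mkₐ K (Ideal.span {f})) u
    have h2 : (fun j => (Ideal.Quotient.mkₐ K (Ideal.span {f})) (u j)) = a :=
      funext fun j => hu j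
    rw [h2] at h1
    exact h1.symm.trans haz
  have hqu : QQ φ (Polynomial K) u = (Finset.univ.gcd u) ^ 2 * QQ φ (Polynomial K) v := by
    have h3 : u = (Finset.univ.gcd u) • v := funext fun j => hv j (Finset.mem_univ j)
    conv_lhs => rw [h3]
    rw [QQ_smul]
  have hfQv : f ∣ QQ φ (Polynomial K) v := by
    rcases hp.dvd_mul.1 (hqu ▸ hfu) with h | h
    · exact absurd (hp.dvd_of_dvd_pow h) hfg0
    · exact h
  obtain ⟨hQvne, hQvdeg, hQvlead⟩ := QQ_poly_spec φ haniso v hv0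
  set d := Finset.univ.sup fun i => (v i).natDegree with hdd
  have hvdeg : ∀ j, (v j).natDegree < f.natDegree := by
    intro j
    rcases eq_or_ne (v j) 0 with h | h
    · rw [h, Polynomial.natDegree_zero]; exact hfdeg
    · have h4 : (v j).natDegree ≤ (u j).natDegree := by
        rw [hv j (Finset.mem_univ j), Polynomial.natDegree_mul hg0ne h]
        omega
      exact lt_of_le_of_lt h4 (hud j)
  have hdlt : d < f.natDegree := by
    rw [hdd]
    exact (Finset.sup_lt_iff (by simpa using hfdeg)).2 fun j _ => hvdeg j
  obtain ⟨g₁, hg₁⟩ := hfQv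
  have hg₁ne : g₁ ≠ 0 := by
    rintro rfl
    rw [mul_zero] at hg₁
    exact hQvne hg₁
  have hdeg₁ : 2 * d = f.natDegree + g₁.natDegree := by
    rw [← hQvdeg, hg₁, Polynomial.natDegree_mul hmonic.ne_zero hg₁ne]
  have hlcg₁ : g₁.leadingCoeff = φ (fun i => (v i).coeff d) := by
    have h5 := Polynomial.leadingCoeff_mul f g₁
    rw [← hg₁, hQvlead, hmonic.leadingCoeff, one_mul] at h5
    exact h5.symm
  have hc₀ne : g₁.leadingCoeff ≠ 0 := Polynomial.leadingCoeff_ne_zero.2 hg₁ne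
  set S := UniqueFactorizationMonoid.normalizedFactors g₁ with hS
  have hSmonic : ∀ q ∈ S, (q : Polynomial K).Monic := by
    intro q hq
    have h1 := UniqueFactorizationMonoid.normalize_normalized_factor q hq
    have h2 : q ≠ 0 :=
      (UniqueFactorizationMonoid.irreducible_of_normalized_factor q hq).ne_zero
    rw [← h1]
    exact Polynomial.monic_normalize h2
  have hSprodmonic : (S.prod).Monic := by
    have := Polynomial.monic_multiset_prod_of_monic S id fun q hq => hSmonic q hq
    simpa using this
  obtain ⟨U, hU⟩ := UniqueFactorizationMonoid.prod_normalizedFactors hg₁ne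
  have hUc : (U : Polynomial K) = Polynomial.C ((U : Polynomial K).coeff 0) :=
    Polynomial.eq_C_of_natDegree_eq_zero (Polynomial.natDegree_eq_zero_of_isUnit U.isUnit)
  have hgfact : g₁ = S.prod * Polynomial.C g₁.leadingCoeff := by
    have h6 : g₁.leadingCoeff = (U : Polynomial K).coeff 0 := by
      rw [← hU, Polynomial.leadingCoeff_mul, hSprodmonic.leadingCoeff, one_mul, hUc,
        Polynomial.leadingCoeff_C]
      simp
    rw [h6, ← hUc, hU]
  have hqmem : ∀ q ∈ S, ∃ k ≤ q.natDegree,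
      algebraMap (Polynomial K) (FractionRing (Polynomial K)) q ∈
        Dpow (φ.baseChange (FractionRing (Polynomial K))) k := by
    intro q hq
    have hqirr := UniqueFactorizationMonoid.irreducible_of_normalized_factor q hq
    have hqmonic := hSmonic q hq
    have hqdvd : q ∣ g₁ := UniqueFactorizationMonoid.dvd_of_mem_normalizedFactors hq
    have hiso_q : IsotropicOver φ (AdjoinRoot q) := by
      rw [isotropicOver_iff]
      refine ⟨fun j => AdjoinRoot.mk q (v j), ?_, ?_⟩
      · intro h
        have h7 : ∀ j, q ∣ v j := fun j => AdjoinRoot.mk_eq_zero.1 (congrFun h j)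
        have h8 : q ∣ Finset.univ.gcd v := Finset.dvd_gcd fun j _ => h7 j
        rw [hv1] at h8
        exact hqirr.not_isUnit (isUnit_of_dvd_one h8)
      · have h1 := QQ_natural φ (Ideal.Quotient.mkₐ K (Ideal.span {q})) v
        have h2 : (fun j => (Ideal.Quotient.mkₐ K (Ideal.span {q})) (v j))
            = fun j => AdjoinRoot.mk q (v j) := rfl
        rw [h2] at h1
        refine h1.trans (AdjoinRoot.mk_eq_zero.2 ?_)
        rw [hg₁]
        exact hqdvd.mul_left f
    have hqdegN : q.natDegree < N := by
      have h3 : q.natDegree ≤ g₁.natDegree := Polynomial.natDegree_le_of_dvd hqdvd hg₁ne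
      omega
    exact IH q.natDegree hqdegN q le_rfl hqmonic hqirr hiso_q
  obtain ⟨kS, hkS, hkSmem⟩ := multiset_dpow φ S hqmem
  have hsumdeg : (S.map Polynomial.natDegree).sum = g₁.natDegree := by
    rw [← Polynomial.natDegree_multiset_prod_of_monic S hSmonic]
    conv_rhs => rw [hgfact]
    rw [Polynomial.natDegree_mul_C hc₀ne]
  -- final assembly over the fraction field
  set F := FractionRing (Polynomial K)
  set algF := algebraMap (Polynomial K) F with halgF
  have hinj : Function.Injective algF := IsFractionRing.injective (Polynomial K) F
  have hg₁F : algF g₁ ≠ 0 := fun h => hg₁ne (hinj (by rw [h, map_zero]))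
  set s := (algF g₁)⁻¹ with hsdef
  have hsne : s ≠ 0 := inv_ne_zero hg₁F
  -- membership 1 : s^2 * algF (QQ v) ∈ Dv
  have hQvF : algF (QQ φ (Polynomial K) v) ∈ Dv (φ.baseChange F) := by
    rw [mem_Dv_iff]
    refine ⟨fun h => hQvne (hinj (by rw [h, map_zero])), fun j => algF (v j), ?_⟩
    have h1 := QQ_natural φ (IsScalarTower.toAlgHom K (Polynomial K) F) v
    simpa only [IsScalarTower.coe_toAlgHom'] using h1
  have hmem1 : s ^ 2 * algF (QQ φ (Polynomial K) v) ∈ Dv (φ.baseChange F) :=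
    sq_mul_mem_Dv φ F hone hsne hQvF
  -- membership 2 : constant
  have hmem2 : algebraMap K F g₁.leadingCoeff ∈ Dv (φ.baseChange F) :=
    const_mem_Dv φ F (fun i => (v i).coeff d) hlcg₁.symm hc₀ne
  -- the identity
  have hCF : algF (Polynomial.C g₁.leadingCoeff) = algebraMap K F g₁.leadingCoeff := by
    rw [halgF, ← Polynomial.algebraMap_eq, ← IsScalarTower.algebraMap_apply]
  have hkey : algF f = ((s ^ 2 * algF (QQ φ (Polynomial K) v))
      * algebraMap K F g₁.leadingCoeff) * algF S.prod := by
    have hYG : algF (QQ φ (Polynomial K) v) = algF f * algF g₁ := by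
      rw [hg₁, map_mul]
    have hGfact : algF g₁ = algebraMap K F g₁.leadingCoeff * algF S.prod := by
      conv_lhs => rw [hgfact]
      rw [map_mul, hCF, mul_comm]
    rw [hYG]
    have hsG : s * algF g₁ = 1 := inv_mul_cancel₀ hg₁F
    rw [mul_assoc _ (algebraMap K F _), ← hGfact]
    linear_combination (-(algF f) * (s * algF g₁ + 1)) * hsG
  -- assemble Dpow
  have hfinal : algF f ∈ Dpow (φ.baseChange F) (1 + 1 + kS) := by
    rw [hkey]
    exact Dpow_mul _ (Dpow_mul _ (mem_Dpow_one _ hmem1) (mem_Dpow_one _ hmem2)) hkSmem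
  refine ⟨1 + 1 + kS, ?_, hfinal⟩
  omega

end S8

/-- for anisotropic `φ` representing 1 and monic irreducible `f ∈ K[X]`,
`φ` is isotropic over `K(f) = K[X]/(f)` iff `f` is a product of at most `deg f`
values of `φ` over `K(X)`. -/
theorem stmt_8 {K : Type*} [Field K] [Invertible (2 : K)] {n : ℕ}
    (φ : QuadraticForm K (Fin n → K)) (haniso : φ.Anisotropic)
    (hone : ∃ v, φ v = 1)
    (f : Polynomial K) (hmonic : f.Monic) (hf : Irreducible f) :
    IsotropicOver φ (AdjoinRoot f) ↔
      ∃ k ≤ f.natDegree,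
        algebraMap (Polynomial K) (FractionRing (Polynomial K)) f ∈
          Dpow (φ.baseChange (FractionRing (Polynomial K))) k := by
  constructor
  · exact fun h => S8.fwd_dir φ haniso hone f.natDegree f le_rfl hmonic hf h
  · exact fun h => S8.rev_dir φ f hmonic hf h

end
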